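/- Let B = B(x⁰;R) be a closed Euclidean ball in ℝ^n, let S* be a regular simplex inscribed into B (all vertices on the boundary sphere), and let P* : C(B) → C(B) be the corresponding interpolation projector. Define ψ(t) := (2√n/(n+1))·(t(n+1−t))^{1/2} + |1 − 2t/(n+1)| for 0 ≤ t ≤ n+1, and a := ⌊(n+1)/2 − √(n+1)/2⌋. Then ‖P*‖_B = max{ψ(a), ψ(a+1)}, and √n ≤ ‖P*‖_B ≤ √(n+1); moreover, ‖P*‖_B = √n holds only for n = 1, and ‖P*‖_B = √(n+1) holds if and only if √(n+1) is an integer. -/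

import Mathlib

open Set MeasureTheory Finset Metric

noncomputable section

/-- The unit cube `Q_n = [0,1]^n` in `ℝ^n`. -/
def unitCube (n : ℕ) : Set (EuclideanSpace ℝ (Fin n)) :=
  {x | ∀ i, x i ∈ Set.Icc (0 : ℝ) 1}

/-- The set of vertices of the unit cube `Q_n`. -/
def cubeVertices (n : ℕ) : Set (EuclideanSpace ℝ (Fin n)) :=
  {x | ∀ i, x i = 0 ∨ x i = 1}

/-- The closed unit Euclidean ball `B_n` in `ℝ^n`. -/
def unitBall (n : ℕ) : Set (EuclideanSpace ℝ (Fin n)) :=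
  Metric.closedBall 0 1

/-- Image of a set under the homothety with center `c` and ratio `σ`. -/
def homothet {n : ℕ} (c : EuclideanSpace ℝ (Fin n)) (σ : ℝ)
    (S : Set (EuclideanSpace ℝ (Fin n))) : Set (EuclideanSpace ℝ (Fin n)) :=
  (fun x => c + σ • (x - c)) '' S

/-- The simplex with vertex set `v` (its convex hull). -/
def simplexSet {n : ℕ} (v : Fin (n + 1) → EuclideanSpace ℝ (Fin n)) :
    Set (EuclideanSpace ℝ (Fin n)) :=
  convexHull ℝ (Set.range v)

/-- The centroid (center of gravity) of the simplex with vertices `v`. -/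
def simplexCentroid {n : ℕ} (v : Fin (n + 1) → EuclideanSpace ℝ (Fin n)) :
    EuclideanSpace ℝ (Fin n) :=
  Finset.univ.centroid ℝ v

/-- `σS`: homothetic copy of the simplex `S` with center at its centroid and ratio `σ`. -/
def simplexHomothet {n : ℕ} (v : Fin (n + 1) → EuclideanSpace ℝ (Fin n)) (σ : ℝ) :
    Set (EuclideanSpace ℝ (Fin n)) :=
  homothet (simplexCentroid v) σ (simplexSet v)

/-- The absorption index `ξ(Ω;S)`: minimal `σ ≥ 1` with `Ω ⊆ σS`. -/
def xiInd {n : ℕ} (Ω : Set (EuclideanSpace ℝ (Fin n)))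
    (v : Fin (n + 1) → EuclideanSpace ℝ (Fin n)) : ℝ :=
  sInf {σ : ℝ | 1 ≤ σ ∧ Ω ⊆ simplexHomothet v σ}

/-- `α(Ω;S)`: minimal `σ > 0` such that `Ω` is contained in a translate of `σS`. -/
def alphaInd {n : ℕ} (Ω : Set (EuclideanSpace ℝ (Fin n)))
    (v : Fin (n + 1) → EuclideanSpace ℝ (Fin n)) : ℝ :=
  sInf {σ : ℝ | 0 < σ ∧ ∃ t : EuclideanSpace ℝ (Fin n),
    Ω ⊆ (fun x => t + x) '' simplexHomothet v σ}

/-- `lam` is the family of basic Lagrange polynomials of the simplex with vertices `v`: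
affine maps with `lam j (v k) = δ_{jk}`. -/
def IsLagrangeBasis {n : ℕ} (v : Fin (n + 1) → EuclideanSpace ℝ (Fin n))
    (lam : Fin (n + 1) → (EuclideanSpace ℝ (Fin n) →ᵃ[ℝ] ℝ)) : Prop :=
  ∀ j k, lam j (v k) = if j = k then (1 : ℝ) else 0

/-- The `i`-th axial diameter of a set: maximal length of a segment contained in it
and parallel to the `i`-th coordinate axis. -/
def axialDiameter {n : ℕ} (i : Fin n) (S : Set (EuclideanSpace ℝ (Fin n))) : ℝ :=
  sSup {t : ℝ | 0 ≤ t ∧ ∃ x, x ∈ S ∧ x + t • (EuclideanSpace.single i (1 : ℝ)) ∈ S}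

/-- Norm of the interpolation projector with Lagrange basis `lam`, as an operator
`C(Ω) → C(Ω)`: it equals `max_{x ∈ Ω} Σ_j |λ_j(x)|`. -/
def projNorm {n : ℕ} (Ω : Set (EuclideanSpace ℝ (Fin n)))
    (lam : Fin (n + 1) → (EuclideanSpace ℝ (Fin n) →ᵃ[ℝ] ℝ)) : ℝ :=
  sSup ((fun x => ∑ j, |lam j x|) '' Ω)

/-- `θ_n(Ω)`: the minimal norm of an interpolation projector with nodes in `Ω`. -/
def thetaMin (n : ℕ) (Ω : Set (EuclideanSpace ℝ (Fin n))) : ℝ :=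
  sInf {t : ℝ | ∃ v : Fin (n + 1) → EuclideanSpace ℝ (Fin n),
    ∃ lam : Fin (n + 1) → (EuclideanSpace ℝ (Fin n) →ᵃ[ℝ] ℝ),
      AffineIndependent ℝ v ∧ (∀ j, v j ∈ Ω) ∧ IsLagrangeBasis v lam ∧
      t = projNorm Ω lam}

/-- `ξ_n`: minimal absorption index of the unit cube by a contained nondegenerate simplex. -/
def xiMin (n : ℕ) : ℝ :=
  sInf {t : ℝ | ∃ v : Fin (n + 1) → EuclideanSpace ℝ (Fin n),
    AffineIndependent ℝ v ∧ simplexSet v ⊆ unitCube n ∧ t = xiInd (unitCube n) v}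

/-- The standardized Legendre polynomial `χ_n` (Rodrigues formula). -/
def legendreChi (n : ℕ) (t : ℝ) : ℝ :=
  (1 / (2 ^ n * (n.factorial : ℝ))) * iteratedDeriv n (fun s : ℝ => (s ^ 2 - 1) ^ n) t

/-- The inverse of `χ_n` on the half-axis `[1, +∞)`. -/
def legendreInv (n : ℕ) (y : ℝ) : ℝ :=
  Function.invFunOn (legendreChi n) (Set.Ici 1) y

/-- `ν_n`: the maximal volume of an `n`-dimensional simplex contained in `Q_n`. -/
def maxSimplexVol (n : ℕ) : ℝ :=
  sSup {t : ℝ | ∃ v : Fin (n + 1) → EuclideanSpace ℝ (Fin n),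
    AffineIndependent ℝ v ∧ simplexSet v ⊆ unitCube n ∧
    t = (volume (simplexSet v)).toReal}

/-- `h_n`: the maximal determinant of an `n×n` matrix with entries in `{0,1}`. -/
def maxDet01 (n : ℕ) : ℝ :=
  sSup {d : ℝ | ∃ M : Matrix (Fin n) (Fin n) ℝ,
    (∀ i j, M i j = 0 ∨ M i j = 1) ∧ d = M.det}

/-- `σ_n`: the volume of a regular `n`-dimensional simplex inscribed into `B_n`. -/
def regSimplexVol (n : ℕ) : ℝ :=
  sSup {t : ℝ | ∃ v : Fin (n + 1) → EuclideanSpace ℝ (Fin n),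
    AffineIndependent ℝ v ∧ (∃ e : ℝ, ∀ j k, j ≠ k → dist (v j) (v k) = e) ∧
    (∀ j, ‖v j‖ = 1) ∧ t = (volume (simplexSet v)).toReal}



noncomputable section AuxRegSimplexProof
open Finset Metric
open scoped RealInnerProductSpace
set_option linter.unusedSectionVars false
set_option linter.unusedTactic false
set_option linter.unreachableTactic false

/-- The explicit function ψ. -/
def psiF (n : ℕ) (t : ℝ) : ℝ :=
  2 * Real.sqrt n / ((n : ℝ) + 1) * Real.sqrt (t * ((n : ℝ) + 1 - t)) +
    |1 - 2 * t / ((n : ℝ) + 1)|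

/-- Auxiliary increasing function whose square measures the defect `√(n+1) - ψ`. -/
def gAux (n : ℕ) (t : ℝ) : ℝ :=
  Real.sqrt (Real.sqrt ((n:ℝ)+1) + 1) * Real.sqrt t -
    Real.sqrt (Real.sqrt ((n:ℝ)+1) - 1) * Real.sqrt ((n:ℝ) + 1 - t)

lemma gAux_def (n : ℕ) (t : ℝ) : gAux n t =
  Real.sqrt (Real.sqrt ((n:ℝ)+1) + 1) * Real.sqrt t -
    Real.sqrt (Real.sqrt ((n:ℝ)+1) - 1) * Real.sqrt ((n:ℝ) + 1 - t) := rfl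

lemma q_sq (n : ℕ) : Real.sqrt ((n:ℝ)+1) ^ 2 = (n:ℝ) + 1 :=
  Real.sq_sqrt (by positivity)

lemma one_lt_q {n : ℕ} (hn : 0 < n) : 1 < Real.sqrt ((n:ℝ)+1) := by
  have h : (1:ℝ) < (n:ℝ) + 1 := by
    have : (1:ℝ) ≤ (n:ℝ) := by exact_mod_cast hn
    linarith
  nlinarith [q_sq n, Real.sqrt_nonneg ((n:ℝ)+1)]

lemma psiF_symm (n : ℕ) (t : ℝ) : psiF n ((n:ℝ) + 1 - t) = psiF n t := by
  unfold psiF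
  have h1 : ((n:ℝ)+1-t) * ((n:ℝ)+1 - ((n:ℝ)+1-t)) = t * ((n:ℝ)+1-t) := by ring
  rw [h1]
  congr 1
  have hn1 : ((n:ℝ)+1) ≠ 0 := by positivity
  rw [show (1 - 2*((n:ℝ)+1-t)/((n:ℝ)+1)) = -(1 - 2*t/((n:ℝ)+1)) by field_simp; ring,
    abs_neg]

lemma gAux_mono (n : ℕ) {s t : ℝ} (hst : s ≤ t) : gAux n s ≤ gAux n t := by
  unfold gAux
  have h1 : Real.sqrt s ≤ Real.sqrt t := Real.sqrt_le_sqrt hst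
  have h2 : Real.sqrt ((n:ℝ)+1-t) ≤ Real.sqrt ((n:ℝ)+1-s) := Real.sqrt_le_sqrt (by linarith)
  have c1 : 0 ≤ Real.sqrt (Real.sqrt ((n:ℝ)+1) + 1) := Real.sqrt_nonneg _
  have c2 : 0 ≤ Real.sqrt (Real.sqrt ((n:ℝ)+1) - 1) := Real.sqrt_nonneg _
  nlinarith

lemma psiF_rep {n : ℕ} (hn : 0 < n) {t : ℝ} (h0 : 0 ≤ t) (h1 : 2*t ≤ (n:ℝ)+1) :
    psiF n t = Real.sqrt ((n:ℝ)+1) - (gAux n t)^2 / ((n:ℝ)+1) := by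
  have hq := one_lt_q hn
  have hq2 := q_sq n
  set q := Real.sqrt ((n:ℝ)+1) with hqdef
  have hnt : (0:ℝ) ≤ (n:ℝ)+1-t := by linarith
  have e1 : Real.sqrt (q+1) ^ 2 = q + 1 := Real.sq_sqrt (by linarith)
  have e2 : Real.sqrt (q-1) ^ 2 = q - 1 := Real.sq_sqrt (by linarith)
  have e3 : Real.sqrt t ^ 2 = t := Real.sq_sqrt h0
  have e4 : Real.sqrt ((n:ℝ)+1-t) ^ 2 = (n:ℝ)+1-t := Real.sq_sqrt hnt
  -- cross term
  have e5 : Real.sqrt (q+1) * Real.sqrt t * (Real.sqrt (q-1) * Real.sqrt ((n:ℝ)+1-t))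
      = Real.sqrt n * Real.sqrt (t * ((n:ℝ)+1-t)) := by
    rw [show Real.sqrt (q+1) * Real.sqrt t * (Real.sqrt (q-1) * Real.sqrt ((n:ℝ)+1-t))
        = (Real.sqrt (q+1) * Real.sqrt (q-1)) * (Real.sqrt t * Real.sqrt ((n:ℝ)+1-t)) by ring]
    rw [← Real.sqrt_mul (by linarith) (q-1), ← Real.sqrt_mul h0]
    congr 2
    nlinarith
  have habs : |1 - 2*t/((n:ℝ)+1)| = 1 - 2*t/((n:ℝ)+1) := by
    rw [abs_of_nonneg]
    rw [sub_nonneg, div_le_one (by positivity)]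
    linarith
  unfold psiF gAux
  rw [habs, ← hqdef]
  have hg2 : (Real.sqrt (q+1) * Real.sqrt t - Real.sqrt (q-1) * Real.sqrt ((n:ℝ)+1-t))^2
      = (q-1)*((n:ℝ)+1) + 2*t - 2*(Real.sqrt n * Real.sqrt (t*((n:ℝ)+1-t))) := by
    linear_combination (Real.sqrt t)^2 * e1 + (q+1) * e3 +
      (Real.sqrt ((n:ℝ)+1-t))^2 * e2 + (q-1) * e4 - 2 * e5
  rw [hg2]
  have hne : ((n:ℝ)+1) ≠ 0 := by positivity
  generalize Real.sqrt (t*((n:ℝ)+1-t)) = S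
  generalize Real.sqrt (n:ℝ) = sn
  field_simp
  ring

lemma psiF_def (n : ℕ) (t : ℝ) : psiF n t =
  2 * Real.sqrt n / ((n : ℝ) + 1) * Real.sqrt (t * ((n : ℝ) + 1 - t)) +
    |1 - 2 * t / ((n : ℝ) + 1)| := rfl

/-- the real maximizer -/
def tstarF (n : ℕ) : ℝ := (((n:ℝ)+1) - Real.sqrt ((n:ℝ)+1))/2

lemma tstar_nonneg {n : ℕ} (hn : 0 < n) : 0 ≤ tstarF n := by
  have hq := one_lt_q hn
  have h2 := q_sq n
  unfold tstarF
  nlinarith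

lemma tstar_le {n : ℕ} (hn : 0 < n) : 2 * tstarF n ≤ (n:ℝ)+1 := by
  have hq := one_lt_q hn
  unfold tstarF; nlinarith

lemma gAux_tstar {n : ℕ} (hn : 0 < n) : gAux n (tstarF n) = 0 := by
  have hq := one_lt_q hn
  have hq2 := q_sq n
  set q := Real.sqrt ((n:ℝ)+1) with hqd
  have ht0 : 0 ≤ tstarF n := tstar_nonneg hn
  have ht1 : 0 ≤ (n:ℝ)+1 - tstarF n := by unfold tstarF at *; nlinarith
  rw [gAux_def, sub_eq_zero, ← hqd]
  have h1 : (Real.sqrt (q+1) * Real.sqrt (tstarF n))^2 = (q+1) * tstarF n := by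
    rw [mul_pow, Real.sq_sqrt (by linarith), Real.sq_sqrt ht0]
  have h2 : (Real.sqrt (q-1) * Real.sqrt ((n:ℝ)+1 - tstarF n))^2
      = (q-1) * ((n:ℝ)+1 - tstarF n) := by
    rw [mul_pow, Real.sq_sqrt (by linarith), Real.sq_sqrt ht1]
  have key : (q+1) * tstarF n = (q-1) * ((n:ℝ)+1 - tstarF n) := by
    unfold tstarF; linear_combination -hq2
  have p1 : 0 ≤ Real.sqrt (q+1) * Real.sqrt (tstarF n) := by positivity
  have p2 : 0 ≤ Real.sqrt (q-1) * Real.sqrt ((n:ℝ)+1 - tstarF n) := by positivity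
  nlinarith [h1, h2, key]

lemma gAux_eq_zero {n : ℕ} (hn : 0 < n) {u : ℝ} (h0 : 0 ≤ u) (h1 : u ≤ (n:ℝ)+1)
    (hg : gAux n u = 0) : u = tstarF n := by
  have hq := one_lt_q hn
  have hq2 := q_sq n
  set q := Real.sqrt ((n:ℝ)+1) with hqd
  rw [gAux_def, sub_eq_zero, ← hqd] at hg
  have h1' : (Real.sqrt (q+1) * Real.sqrt u)^2 = (q+1) * u := by
    rw [mul_pow, Real.sq_sqrt (by linarith), Real.sq_sqrt h0]
  have h2' : (Real.sqrt (q-1) * Real.sqrt ((n:ℝ)+1 - u))^2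
      = (q-1) * ((n:ℝ)+1 - u) := by
    rw [mul_pow, Real.sq_sqrt (by linarith), Real.sq_sqrt (by linarith)]
  have key : (q+1) * u = (q-1) * ((n:ℝ)+1 - u) := by rw [← h1', ← h2', hg]
  unfold tstarF
  rw [← hqd]
  nlinarith [key, hq2]

section
variable {n : ℕ} (hn : 0 < n) {a : ℤ} (ha : a = ⌊tstarF n⌋)

include hn ha

lemma a_nonneg : 0 ≤ a := by
  rw [ha, Int.le_floor]
  exact_mod_cast tstar_nonneg hn

lemma two_a_le : 2*(a:ℝ) + 2 ≤ (n:ℝ) + 1 := by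
  have h1 : (a:ℝ) ≤ tstarF n := by rw [ha]; exact Int.floor_le _
  have hq := one_lt_q hn
  have h2 : 2*(a:ℝ) < (n:ℝ) := by unfold tstarF at h1; nlinarith
  have h3 : 2*a < (n:ℤ) := by exact_mod_cast h2
  have h4 : 2*a + 1 ≤ (n:ℤ) := h3
  have h5 : (2*a + 1 : ℝ) ≤ (n:ℝ) := by exact_mod_cast h4
  linarith

lemma a_le_tstar : (a:ℝ) ≤ tstarF n := by rw [ha]; exact Int.floor_le _

lemma tstar_lt_a1 : tstarF n < (a:ℝ) + 1 := by
  have := Int.lt_floor_add_one (tstarF n)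
  rw [ha]; push_cast; linarith

/-- ψ at any admissible integer is at most `max (ψ a) (ψ (a+1))`. -/
lemma psiF_nat_le_max (k : ℕ) (hk : k ≤ n + 1) :
    psiF n k ≤ max (psiF n a) (psiF n ((a:ℝ)+1)) := by
  have h0a := a_nonneg hn ha
  have h2a := two_a_le hn ha
  have hat := a_le_tstar hn ha
  have hta1 := tstar_lt_a1 hn ha
  have hts0 := tstar_nonneg hn
  have h0a' : (0:ℝ) ≤ (a:ℝ) := by exact_mod_cast h0a
  have hpos : (0:ℝ) < (n:ℝ)+1 := by positivity
  obtain ⟨m, hm1, hm2, hm3, hm_int⟩ : ∃ m : ℝ, 0 ≤ m ∧ 2*m ≤ (n:ℝ)+1 ∧ psiF n k = psiF n m ∧ ∃ z : ℤ, (z:ℝ) = m := by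
    rcases le_or_gt (2*(k:ℝ)) ((n:ℝ)+1) with h | h
    · exact ⟨k, by positivity, h, rfl, ⟨(k:ℤ), by push_cast; ring⟩⟩
    · refine ⟨(n:ℝ)+1-(k:ℝ), ?_, by linarith, (psiF_symm n _).symm,
        ⟨(n:ℤ)+1-(k:ℤ), by push_cast; ring⟩⟩
      have : (k:ℝ) ≤ (n:ℝ)+1 := by exact_mod_cast hk
      linarith
  rw [hm3]
  rcases le_or_gt m (a:ℝ) with hma | hma
  · refine le_trans ?_ (le_max_left _ _)
    rw [psiF_rep hn hm1 hm2, psiF_rep hn h0a' (by linarith)]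
    have hg1 : gAux n m ≤ gAux n (a:ℝ) := gAux_mono n hma
    have hg2 : gAux n (a:ℝ) ≤ 0 := by
      rw [← gAux_tstar hn]; exact gAux_mono n hat
    have hsq : (gAux n (a:ℝ))^2 ≤ (gAux n m)^2 := by nlinarith
    have : (gAux n (a:ℝ))^2/((n:ℝ)+1) ≤ (gAux n m)^2/((n:ℝ)+1) := by gcongr
    linarith
  · refine le_trans ?_ (le_max_right _ _)
    -- here a < m, m real from ℕ k or n+1-k, but m may not be ≥ a+1... 
    -- m is an integer value; since a < m and both integral, a+1 ≤ m
    obtain ⟨z, hz⟩ := hm_int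
    have hz1 : a < z := by
      have : (a:ℝ) < (z:ℝ) := by rw [hz]; exact hma
      exact_mod_cast this
    have hma1 : (a:ℝ) + 1 ≤ m := by
      have h' : ((a:ℝ)) + 1 ≤ (z:ℝ) := by exact_mod_cast hz1
      rw [hz] at h'
      exact h'
    rw [psiF_rep hn hm1 hm2, psiF_rep hn (by linarith) (by linarith)]
    have hg1 : gAux n ((a:ℝ)+1) ≤ gAux n m := gAux_mono n hma1
    have hg2 : 0 ≤ gAux n ((a:ℝ)+1) := by
      rw [← gAux_tstar hn]; exact gAux_mono n hta1.le
    have hsq : (gAux n ((a:ℝ)+1))^2 ≤ (gAux n m)^2 := by nlinarith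
    have : (gAux n ((a:ℝ)+1))^2/((n:ℝ)+1) ≤ (gAux n m)^2/((n:ℝ)+1) := by gcongr
    linarith

lemma max_le_q : max (psiF n a) (psiF n ((a:ℝ)+1)) ≤ Real.sqrt ((n:ℝ)+1) := by
  have h0a := a_nonneg hn ha
  have h2a := two_a_le hn ha
  have h0a' : (0:ℝ) ≤ (a:ℝ) := by exact_mod_cast h0a
  have hpos : (0:ℝ) < (n:ℝ)+1 := by positivity
  apply max_le
  · rw [psiF_rep hn h0a' (by linarith)]
    have : 0 ≤ (gAux n (a:ℝ))^2/((n:ℝ)+1) := by positivity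
    linarith
  · rw [psiF_rep hn (by linarith) (by linarith)]
    have : 0 ≤ (gAux n ((a:ℝ)+1))^2/((n:ℝ)+1) := by positivity
    linarith

lemma max_eq_q_iff :
    max (psiF n a) (psiF n ((a:ℝ)+1)) = Real.sqrt ((n:ℝ)+1) ↔
      ∃ m : ℕ, (m:ℝ) = Real.sqrt ((n:ℝ)+1) := by
  have h0a := a_nonneg hn ha
  have h2a := two_a_le hn ha
  have h0a' : (0:ℝ) ≤ (a:ℝ) := by exact_mod_cast h0a
  have hpos : (0:ℝ) < (n:ℝ)+1 := by positivity
  have hq := one_lt_q hn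
  have hq2 := q_sq n
  constructor
  · intro hmax
    have : psiF n a = Real.sqrt ((n:ℝ)+1) ∨ psiF n ((a:ℝ)+1) = Real.sqrt ((n:ℝ)+1) := by
      rcases max_choice (psiF n a) (psiF n ((a:ℝ)+1)) with h | h
      · left; rw [← h]; exact hmax
      · right; rw [← h]; exact hmax
    have hz : ∃ b : ℤ, (b:ℝ) = tstarF n := by
      rcases this with h | h
      · rw [psiF_rep hn h0a' (by linarith)] at h
        have hg : gAux n (a:ℝ) = 0 := by
          have h3 : (gAux n (a:ℝ))^2/((n:ℝ)+1) = 0 := by linarith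
          field_simp at h3
          first
          | exact h3
          | exact pow_eq_zero_iff two_ne_zero |>.mp (by rw [mul_zero] at h3; exact h3)
        exact ⟨a, (gAux_eq_zero hn h0a' (by linarith) hg).symm ▸ rfl⟩
      · rw [psiF_rep hn (by linarith) (by linarith)] at h
        have hg : gAux n ((a:ℝ)+1) = 0 := by
          have h3 : (gAux n ((a:ℝ)+1))^2/((n:ℝ)+1) = 0 := by linarith
          field_simp at h3
          first
          | exact h3
          | exact pow_eq_zero_iff two_ne_zero |>.mp (by rw [mul_zero] at h3; exact h3)
        refine ⟨a+1, ?_⟩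
        have := gAux_eq_zero hn (by linarith : (0:ℝ) ≤ (a:ℝ)+1) (by linarith) hg
        push_cast
        linarith [this]
    obtain ⟨b, hb⟩ := hz
    -- √(n+1) = n+1-2b  is a nonnegative integer
    have hqval : Real.sqrt ((n:ℝ)+1) = ((n:ℤ)+1-2*b : ℤ) := by
      unfold tstarF at hb
      push_cast
      linarith
    have hqn : (0:ℝ) ≤ ((n:ℤ)+1-2*b : ℤ) := by rw [← hqval]; positivity
    have hbn : (0:ℤ) ≤ (n:ℤ)+1-2*b := by exact_mod_cast hqn
    exact ⟨((n:ℤ)+1-2*b).toNat, by rw [hqval]; congr 1; exact_mod_cast Int.toNat_of_nonneg hbn⟩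
  · rintro ⟨m, hm⟩
    -- tstar = (m^2-m)/2 is an integer, equals a
    have hm2 : (m:ℝ)^2 = (n:ℝ)+1 := by rw [hm]; exact hq2
    have hmn : m^2 = n+1 := by exact_mod_cast hm2
    have hts : tstarF n = ((m^2 - m : ℕ) : ℝ)/2 := by
      unfold tstarF
      have hmm : m ≤ m^2 := by nlinarith
      push_cast [Nat.cast_sub hmm]
      rw [← hm]
      push_cast [hmn] at *
      linarith
    have heven : 2 ∣ m^2 - m := by
      rcases Nat.even_or_odd m with h | h
      · obtain ⟨r, hr⟩ := h
        exact ⟨2*r*r - r, by subst hr; ring_nf; omega⟩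
      · obtain ⟨r, hr⟩ := h
        exact ⟨2*r*r+r, by subst hr; ring_nf; omega⟩
    obtain ⟨c, hc⟩ := heven
    have htsc : tstarF n = (c:ℝ) := by rw [hts, hc]; push_cast; ring
    have hac : a = (c:ℤ) := by
      rw [ha, htsc]
      exact_mod_cast Int.floor_natCast (R := ℝ) c
    have hpsi : psiF n a = Real.sqrt ((n:ℝ)+1) := by
      rw [psiF_rep hn h0a' (by linarith)]
      have : gAux n (a:ℝ) = 0 := by
        rw [show ((a:ℝ)) = tstarF n by rw [hac, htsc]; push_cast; ring]
        exact gAux_tstar hn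
      rw [this]
      norm_num
    have hle := max_le_q hn ha
    have : psiF n a ≤ max (psiF n a) (psiF n ((a:ℝ)+1)) := le_max_left _ _
    linarith [hle, hpsi ▸ this]

end

section
variable {n : ℕ} (hn : 0 < n)
include hn

lemma one_le_sn : 1 ≤ Real.sqrt n := by
  have h0 : (1:ℝ) ≤ (n:ℝ) := by exact_mod_cast hn
  nlinarith [Real.sq_sqrt (by positivity : (0:ℝ) ≤ (n:ℝ)), Real.sqrt_nonneg (n:ℝ)]

/-- Core inequality: ψ(u) ≥ √n on the interval [(√n-1)²/2, (n+1)/2]. -/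
lemma psiF_ge_sqrtn {u : ℝ} (hkm : (Real.sqrt n - 1)^2/2 ≤ u) (hu : 2*u ≤ (n:ℝ)+1) :
    Real.sqrt n ≤ psiF n u := by
  have hsn : Real.sqrt (n:ℝ) ^ 2 = (n:ℝ) := Real.sq_sqrt (by positivity)
  set sn := Real.sqrt (n:ℝ) with hsnd
  have hsn1 : 1 ≤ sn := one_le_sn hn
  have hu0 : 0 ≤ u := le_trans (by positivity) hkm
  have hpos : (0:ℝ) < (n:ℝ)+1 := by positivity
  have hW2 : Real.sqrt (u * ((n:ℝ)+1-u)) ^ 2 = u * ((n:ℝ)+1-u) :=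
    Real.sq_sqrt (by nlinarith)
  set W := Real.sqrt (u * ((n:ℝ)+1-u)) with hWd
  have hW0 : 0 ≤ W := Real.sqrt_nonneg _
  rw [psiF_def, ← hsnd, ← hWd]
  have habs : |1 - 2*u/((n:ℝ)+1)| = 1 - 2*u/((n:ℝ)+1) := by
    rw [abs_of_nonneg]
    rw [sub_nonneg, div_le_one hpos]
    linarith
  rw [habs]
  rw [show 2*sn/((n:ℝ)+1)*W + (1 - 2*u/((n:ℝ)+1))
      = (2*sn*W + (((n:ℝ)+1) - 2*u))/((n:ℝ)+1) by field_simp]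
  rw [le_div_iff₀ hpos]
  -- key inequality: (n+1)(sn-1) + 2u ≤ 2 sn W
  have hdiscr : 4*(n:ℝ)*(u*((n:ℝ)+1-u)) - (((n:ℝ)+1)*(sn-1)+2*u)^2
      = 4*((n:ℝ)+1)*((((n:ℝ)+1))/2-u)*(u-(sn-1)^2/2) := by
    linear_combination (-(2:ℝ)*((n:ℝ)+1)*u) * hsn
  have hfac : 0 ≤ 4*((n:ℝ)+1)*((((n:ℝ)+1))/2-u)*(u-(sn-1)^2/2) := by
    have f1 : 0 ≤ (((n:ℝ)+1))/2-u := by linarith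
    have f2 : 0 ≤ u-(sn-1)^2/2 := by linarith
    positivity
  have hB : 0 ≤ ((n:ℝ)+1)*(sn-1)+2*u := by nlinarith
  have hsq : (((n:ℝ)+1)*(sn-1)+2*u)^2 ≤ (2*sn*W)^2 := by
    have e : (2*sn*W)^2 = 4*sn^2*W^2 := by ring
    rw [e, hW2, hsn]
    linarith
  have h2snW : 0 ≤ 2*sn*W := by positivity
  nlinarith [hsq, hB, h2snW]

/-- Strict version. -/
lemma psiF_gt_sqrtn {u : ℝ} (hkm : (Real.sqrt n - 1)^2/2 < u) (hu : 2*u < (n:ℝ)+1) :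
    Real.sqrt n < psiF n u := by
  have hsn : Real.sqrt (n:ℝ) ^ 2 = (n:ℝ) := Real.sq_sqrt (by positivity)
  set sn := Real.sqrt (n:ℝ) with hsnd
  have hsn1 : 1 ≤ sn := one_le_sn hn
  have hu0 : 0 ≤ u := le_trans (by positivity) hkm.le
  have hpos : (0:ℝ) < (n:ℝ)+1 := by positivity
  have hW2 : Real.sqrt (u * ((n:ℝ)+1-u)) ^ 2 = u * ((n:ℝ)+1-u) :=
    Real.sq_sqrt (by nlinarith)
  set W := Real.sqrt (u * ((n:ℝ)+1-u)) with hWd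
  have hW0 : 0 ≤ W := Real.sqrt_nonneg _
  rw [psiF_def, ← hsnd, ← hWd]
  have habs : |1 - 2*u/((n:ℝ)+1)| = 1 - 2*u/((n:ℝ)+1) := by
    rw [abs_of_nonneg]
    rw [sub_nonneg, div_le_one hpos]
    linarith
  rw [habs]
  rw [show 2*sn/((n:ℝ)+1)*W + (1 - 2*u/((n:ℝ)+1))
      = (2*sn*W + (((n:ℝ)+1) - 2*u))/((n:ℝ)+1) by field_simp]
  rw [lt_div_iff₀ hpos]
  have hdiscr : 4*(n:ℝ)*(u*((n:ℝ)+1-u)) - (((n:ℝ)+1)*(sn-1)+2*u)^2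
      = 4*((n:ℝ)+1)*((((n:ℝ)+1))/2-u)*(u-(sn-1)^2/2) := by
    linear_combination (-(2:ℝ)*((n:ℝ)+1)*u) * hsn
  have hfac : 0 < 4*((n:ℝ)+1)*((((n:ℝ)+1))/2-u)*(u-(sn-1)^2/2) := by
    have f1 : 0 < (((n:ℝ)+1))/2-u := by linarith
    have f2 : 0 < u-(sn-1)^2/2 := by linarith
    positivity
  have hB : 0 ≤ ((n:ℝ)+1)*(sn-1)+2*u := by nlinarith
  have hsq : (((n:ℝ)+1)*(sn-1)+2*u)^2 < (2*sn*W)^2 := by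
    have e : (2*sn*W)^2 = 4*sn^2*W^2 := by ring
    rw [e, hW2, hsn]
    linarith
  have h2snW : 0 ≤ 2*sn*W := by positivity
  nlinarith [hsq, hB, h2snW]

end

section
variable {n : ℕ} (hn : 0 < n) {a : ℤ} (ha : a = ⌊tstarF n⌋)
include hn ha

lemma km_lt_a1 : (Real.sqrt n - 1)^2/2 < (a:ℝ) + 1 := by
  have hq := one_lt_q hn
  have hq2 := q_sq n
  have hsn : Real.sqrt (n:ℝ) ^ 2 = (n:ℝ) := Real.sq_sqrt (by positivity)
  have hsn1 := one_le_sn hn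
  have hqsn : Real.sqrt ((n:ℝ)+1) ≤ 2 * Real.sqrt n := by
    have h4 : ((n:ℝ)+1) ≤ 4*(n:ℝ) := by
      have : (1:ℝ) ≤ (n:ℝ) := by exact_mod_cast hn
      linarith
    nlinarith [Real.sqrt_nonneg ((n:ℝ)+1), Real.sqrt_nonneg (n:ℝ)]
  have h1 : (Real.sqrt n - 1)^2/2 ≤ tstarF n := by
    unfold tstarF
    nlinarith
  have h2 := tstar_lt_a1 hn ha
  linarith

lemma sqrtn_le_max : Real.sqrt n ≤ max (psiF n a) (psiF n ((a:ℝ)+1)) := by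
  refine le_trans (psiF_ge_sqrtn hn (km_lt_a1 hn ha).le ?_) (le_max_right _ _)
  have := two_a_le hn ha
  linarith

lemma max_eq_sqrtn_imp (h : max (psiF n a) (psiF n ((a:ℝ)+1)) = Real.sqrt n) : n = 1 := by
  by_contra hne
  have hn2 : 2 ≤ n := by omega
  rcases lt_or_eq_of_le (two_a_le hn ha) with hlt | heq
  · have := psiF_gt_sqrtn hn (km_lt_a1 hn ha) (by linarith)
    have h2 := le_max_right (psiF n a) (psiF n ((a:ℝ)+1))
    linarith [h ▸ h2]
  · -- 2a+2 = n+1, so n odd; also a ≤ tstar forces q ≤ 2, n ≤ 3, so n = 3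
    have hq := one_lt_q hn
    have hq2 := q_sq n
    have hat := a_le_tstar hn ha
    have hq_le : Real.sqrt ((n:ℝ)+1) ≤ 2 := by
      unfold tstarF at hat; linarith
    have hn3 : n ≤ 3 := by
      have h4 : ((n:ℝ)+1) ≤ 4 := by nlinarith
      have h5 : (n:ℝ) ≤ 3 := by linarith
      exact_mod_cast h5
    have heqz : 2*a + 2 = (n:ℤ) + 1 := by exact_mod_cast heq
    have hnodd : n = 3 := by omega
    subst hnodd
    have ha1 : a = 1 := by omega
    subst ha1
    have hp : psiF 3 ((1:ℤ):ℝ) = 2 := by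
      rw [psiF_def]
      push_cast
      rw [show (1:ℝ)*(3+1-1) = 3 by norm_num]
      rw [show |1 - 2*1/((3:ℝ)+1)| = (1/2 : ℝ) by rw [abs_of_nonneg] <;> norm_num]
      have h3 : Real.sqrt 3 ^ 2 = 3 := Real.sq_sqrt (by norm_num)
      linear_combination (1/2 : ℝ) * h3
    have hlt : Real.sqrt ((3:ℕ):ℝ) < 2 := by
      have h3 : Real.sqrt ((3:ℕ):ℝ) ^ 2 = 3 := Real.sq_sqrt (by norm_num)
      nlinarith [Real.sqrt_nonneg ((3:ℕ):ℝ)]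
    have h2 : psiF 3 ((1:ℤ):ℝ) ≤ Real.sqrt ((3:ℕ):ℝ) := h ▸ le_max_left _ _
    rw [hp] at h2
    linarith

end

/-- Gram structure and explicit Lagrange basis for a regular simplex inscribed in a sphere. -/
lemma lagrange_formula {n : ℕ} (hn : 0 < n) (x0 : EuclideanSpace ℝ (Fin n)) (R : ℝ)
    (hR : 0 < R) (v : Fin (n + 1) → EuclideanSpace ℝ (Fin n)) (hv : AffineIndependent ℝ v)
    (e : ℝ) (hreg : ∀ j k, j ≠ k → dist (v j) (v k) = e)
    (hins : ∀ j, dist (v j) x0 = R)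
    (lam : Fin (n + 1) → (EuclideanSpace ℝ (Fin n) →ᵃ[ℝ] ℝ))
    (hlam : ∀ j k, lam j (v k) = if j = k then (1 : ℝ) else 0) :
    (∀ j x, lam j x = 1/((n:ℝ)+1) + ((n:ℝ)/((((n:ℝ)+1))*R^2)) * ⟪x - x0, v j - x0⟫) ∧
    (∀ j, ⟪v j - x0, v j - x0⟫ = R^2) ∧
    (∀ j k, j ≠ k → ⟪v j - x0, v k - x0⟫ = -R^2/(n:ℝ)) ∧
    (∑ j, (v j - x0)) = 0 := by
  set w : Fin (n+1) → EuclideanSpace ℝ (Fin n) := fun j => v j - x0 with hw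
  have hnormw : ∀ j, ‖w j‖ = R := by
    intro j
    rw [hw]
    simpa [dist_eq_norm] using hins j
  have hself : ∀ j, ⟪w j, w j⟫ = R^2 := by
    intro j
    rw [real_inner_self_eq_norm_sq, hnormw]
  set c : ℝ := R^2 - e^2/2 with hc
  have hcross : ∀ j k, j ≠ k → ⟪w j, w k⟫ = c := by
    intro j k hjk
    have h1 : ‖w j - w k‖ = e := by
      rw [hw]
      simp only [sub_sub_sub_cancel_right]
      simpa [dist_eq_norm] using hreg j k hjk
    have h2 : ‖w j - w k‖^2 = ‖w j‖^2 - 2*⟪w j, w k⟫ + ‖w k‖^2 := norm_sub_sq_real _ _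
    rw [h1, hnormw, hnormw] at h2
    rw [hc]; linarith
  -- linear dependence
  have hdep : ¬ LinearIndependent ℝ w := by
    intro hli
    have hcard := hli.fintype_card_le_finrank
    rw [finrank_euclideanSpace_fin] at hcard
    simp at hcard
  rw [Fintype.not_linearIndependent_iff] at hdep
  obtain ⟨z, hz, j0, hj0⟩ := hdep
  -- e ≠ 0
  have hi01 : (⟨0, by omega⟩ : Fin (n+1)) ≠ ⟨1, by omega⟩ := by
    simp [Fin.ext_iff]
  have he : e ≠ 0 := by
    intro he0
    have := hreg _ _ hi01
    rw [he0, dist_eq_zero] at this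
    exact hi01 (hv.injective this)
  have hRc : R^2 - c ≠ 0 := by
    rw [hc]
    intro h
    apply he
    nlinarith [sq_nonneg e]
  -- each j : z j (R²-c) + (Σ z) c = 0
  have hkey : ∀ j, z j * (R^2 - c) + (∑ k, z k) * c = 0 := by
    intro j
    have h0 : ⟪w j, ∑ k, z k • w k⟫ = 0 := by rw [hz, inner_zero_right]
    rw [inner_sum] at h0
    simp only [real_inner_smul_right] at h0
    rw [← Finset.add_sum_erase _ _ (mem_univ j)] at h0
    have h1 : ∑ k ∈ univ.erase j, z k * ⟪w j, w k⟫ = ∑ k ∈ univ.erase j, z k * c := by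
      apply Finset.sum_congr rfl
      intro k hk
      rw [hcross j k (Ne.symm (Finset.ne_of_mem_erase hk))]
    rw [h1, ← Finset.sum_mul, Finset.sum_erase_eq_sub (mem_univ j)] at h0
    rw [hself] at h0
    linarith
  have hzconst : ∀ j, z j = z j0 := by
    intro j
    have h1 := hkey j
    have h2 := hkey j0
    have : z j * (R^2 - c) = z j0 * (R^2 - c) := by linarith
    exact mul_right_cancel₀ hRc this
  have hcval : c = -R^2/(n:ℝ) := by
    have h2 := hkey j0
    have hsz : (∑ k, z k) = ((n:ℝ)+1) * z j0 := by
      rw [Finset.sum_congr rfl (fun k _ => hzconst k)]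
      simp [Finset.card_univ, mul_comm]
      try push_cast
      try ring
    rw [hsz] at h2
    have h3 : z j0 * ((R^2 - c) + ((n:ℝ)+1) * c) = 0 := by linarith
    have h4 : (R^2 - c) + ((n:ℝ)+1) * c = 0 := by
      rcases mul_eq_zero.mp h3 with h | h
      · exact absurd h hj0
      · exact h
    have hn0 : (n:ℝ) ≠ 0 := by positivity
    field_simp
    linarith [h4]
  have hsumw : (∑ j, w j) = 0 := by
    have h1 : ∑ k, z k • w k = z j0 • ∑ k, w k := by
      rw [Finset.smul_sum]
      exact Finset.sum_congr rfl (fun k _ => by rw [hzconst k])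
    rw [h1] at hz
    rcases smul_eq_zero.mp hz with h | h
    · exact absurd h hj0
    · exact h
  have hcross' : ∀ j k, j ≠ k → ⟪w j, w k⟫ = -R^2/(n:ℝ) := by
    intro j k hjk; rw [hcross j k hjk, hcval]
  refine ⟨?_, hself, hcross', hsumw⟩
  -- the Lagrange basis is unique; compare with explicit formula
  set γ : ℝ := (n:ℝ)/((((n:ℝ)+1))*R^2) with hγ
  -- explicit affine map
  set L : Fin (n+1) → (EuclideanSpace ℝ (Fin n) →ᵃ[ℝ] ℝ) := fun j =>
    (γ • (innerSL ℝ (w j)).toLinearMap).toAffineMap +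
      AffineMap.const ℝ (EuclideanSpace ℝ (Fin n)) (1/((n:ℝ)+1) - γ * ⟪x0, w j⟫) with hL
  have hLval : ∀ j x, L j x = 1/((n:ℝ)+1) + γ * ⟪x - x0, w j⟫ := by
    intro j x
    rw [hL]
    simp only [AffineMap.coe_add, Pi.add_apply, AffineMap.const_apply,
      LinearMap.coe_toAffineMap, LinearMap.smul_apply, ContinuousLinearMap.coe_coe,
      innerSL_apply_apply, smul_eq_mul]
    simp only [inner_sub_left, inner_sub_right]
    rw [real_inner_comm (w j) x]
    ring
  have hLbasis : ∀ j k, L j (v k) = if j = k then (1:ℝ) else 0 := by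
    intro j k
    rw [hLval]
    by_cases hjk : j = k
    · subst hjk
      rw [show v j - x0 = w j from rfl, hself, if_pos rfl, hγ]
      have hR0 : R ≠ 0 := ne_of_gt hR
      have hn0 : (n:ℝ) ≠ 0 := by positivity
      field_simp
      try ring
    · rw [show v k - x0 = w k from rfl, real_inner_comm, hcross' j k hjk, if_neg hjk, hγ]
      have hn0 : (n:ℝ) ≠ 0 := by positivity
      have hR0 : R ≠ 0 := ne_of_gt hR
      field_simp
      try ring
  -- affine basis
  have htop : affineSpan ℝ (Set.range v) = ⊤ := by
    rw [hv.affineSpan_eq_top_iff_card_eq_finrank_add_one]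
    simp [finrank_euclideanSpace_fin]
  set b : AffineBasis (Fin (n+1)) ℝ (EuclideanSpace ℝ (Fin n)) := ⟨v, hv, htop⟩ with hb
  have hbv : ∀ k, b k = v k := fun k => rfl
  have happly : ∀ (f : EuclideanSpace ℝ (Fin n) →ᵃ[ℝ] ℝ) (x),
      f x = ∑ k, b.coord k x * f (v k) := by
    intro f x
    conv_lhs => rw [← b.affineCombination_coord_eq_self x]
    rw [Finset.map_affineCombination _ _ _ (b.sum_coord_apply_eq_one x)]
    rw [Finset.affineCombination_eq_linear_combination _ _ _ (b.sum_coord_apply_eq_one x)]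
    simp [hbv]
  intro j x
  have h1 := happly (lam j) x
  have h2 := happly (L j) x
  rw [← hLval]
  rw [h1, h2]
  apply Finset.sum_congr rfl
  intro k _
  rw [hlam j k, hLbasis j k]

section
variable {n : ℕ} {x0 : EuclideanSpace ℝ (Fin n)} {R : ℝ}
  {w : Fin (n+1) → EuclideanSpace ℝ (Fin n)}
  {lam : Fin (n + 1) → (EuclideanSpace ℝ (Fin n) →ᵃ[ℝ] ℝ)}

lemma norm_subset_sum_sq (hn : 0 < n) (hR : 0 < R)
  (hself : ∀ j, ⟪w j, w j⟫ = R^2)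
  (hcross : ∀ j k, j ≠ k → ⟪w j, w k⟫ = -R^2/(n:ℝ)) (A : Finset (Fin (n+1))) :
    ‖∑ j ∈ A, w j‖^2 = R^2 * ((A.card:ℝ) * (((n:ℝ)+1) - (A.card:ℝ)))/(n:ℝ) := by
  have hinner : ⟪∑ j ∈ A, w j, ∑ j ∈ A, w j⟫
      = ∑ i ∈ A, ∑ j ∈ A, ⟪w i, w j⟫ := by
    rw [sum_inner]
    exact Finset.sum_congr rfl (fun i _ => inner_sum _ _ _)
  have hrow : ∀ i ∈ A, ∑ j ∈ A, ⟪w i, w j⟫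
      = R^2 + ((A.card:ℝ) - 1) * (-R^2/(n:ℝ)) := by
    intro i hi
    rw [← Finset.add_sum_erase _ _ hi, hself]
    congr 1
    rw [Finset.sum_congr rfl (fun j hj => hcross i j (Ne.symm (Finset.ne_of_mem_erase hj)))]
    rw [Finset.sum_const, Finset.card_erase_of_mem hi, nsmul_eq_mul]
    have h1 : (1:ℕ) ≤ A.card := Finset.card_pos.mpr ⟨i, hi⟩
    rw [Nat.cast_sub h1]
    norm_num
  rw [← real_inner_self_eq_norm_sq, hinner, Finset.sum_congr rfl hrow, Finset.sum_const,
    nsmul_eq_mul]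
  have hn0 : (n:ℝ) ≠ 0 := by positivity
  field_simp
  ring

lemma sum_lam_eq_one (hn : 0 < n) (hR : 0 < R)
  (hlamx : ∀ j x, lam j x = 1/((n:ℝ)+1) + ((n:ℝ)/((((n:ℝ)+1))*R^2)) * ⟪x - x0, w j⟫)
  (x : EuclideanSpace ℝ (Fin n)) (hsumw' : (∑ j, w j) = 0) :
    ∑ j, lam j x = 1 := by
  have h1 : ∀ j, lam j x = 1/((n:ℝ)+1) + ((n:ℝ)/((((n:ℝ)+1))*R^2)) * ⟪x - x0, w j⟫ :=
    fun j => hlamx j x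
  rw [Finset.sum_congr rfl (fun j _ => h1 j), Finset.sum_add_distrib, Finset.sum_const,
    ← Finset.mul_sum, ← inner_sum, hsumw', inner_zero_right]
  simp [Finset.card_univ]
  field_simp

/-- Key scalar identity used on both sides. -/
lemma gamma_norm_eq (hn : 0 < n) (hR : 0 < R)
  (hself : ∀ j, ⟪w j, w j⟫ = R^2)
  (hcross : ∀ j k, j ≠ k → ⟪w j, w k⟫ = -R^2/(n:ℝ)) (A : Finset (Fin (n+1))) :
    ((n:ℝ)/((((n:ℝ)+1))*R^2)) * (R * ‖∑ j ∈ A, w j‖)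
      = Real.sqrt n/((n:ℝ)+1) * Real.sqrt ((A.card:ℝ) * (((n:ℝ)+1) - (A.card:ℝ))) := by
  have hk1 : (A.card:ℝ) ≤ (n:ℝ)+1 := by
    have := Finset.card_le_card (Finset.subset_univ A)
    rw [Finset.card_univ, Fintype.card_fin] at this
    exact_mod_cast this
  have hk0 : (0:ℝ) ≤ (A.card:ℝ) := by positivity
  have harg : (0:ℝ) ≤ (A.card:ℝ) * (((n:ℝ)+1) - (A.card:ℝ)) := by nlinarith
  have hs2 := norm_subset_sum_sq hn hR hself hcross A
  have hsq1 : Real.sqrt ((A.card:ℝ) * (((n:ℝ)+1) - (A.card:ℝ)))^2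
      = (A.card:ℝ) * (((n:ℝ)+1) - (A.card:ℝ)) := Real.sq_sqrt harg
  have hsq2 : Real.sqrt (n:ℝ)^2 = (n:ℝ) := Real.sq_sqrt (by positivity)
  have hn0 : (0:ℝ) < (n:ℝ) := by exact_mod_cast hn
  have hL : 0 ≤ ((n:ℝ)/((((n:ℝ)+1))*R^2)) * (R * ‖∑ j ∈ A, w j‖) := by positivity
  have hRt : 0 ≤ Real.sqrt n/((n:ℝ)+1) *
      Real.sqrt ((A.card:ℝ) * (((n:ℝ)+1) - (A.card:ℝ))) := by positivity
  have hsqeq : (((n:ℝ)/((((n:ℝ)+1))*R^2)) * (R * ‖∑ j ∈ A, w j‖))^2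
      = (Real.sqrt n/((n:ℝ)+1) * Real.sqrt ((A.card:ℝ) * (((n:ℝ)+1) - (A.card:ℝ))))^2 := by
    rw [mul_pow, mul_pow, mul_pow, hs2, hsq1, div_pow, div_pow, hsq2]
    field_simp
  nlinarith [hL, hRt, hsqeq]

variable (hn : 0 < n) (hR : 0 < R)
  (hself : ∀ j, ⟪w j, w j⟫ = R^2)
  (hcross : ∀ j k, j ≠ k → ⟪w j, w k⟫ = -R^2/(n:ℝ))
  (hsumw : (∑ j, w j) = 0)
  (hlamx : ∀ j x, lam j x = 1/((n:ℝ)+1) + ((n:ℝ)/((((n:ℝ)+1))*R^2)) * ⟪x - x0, w j⟫)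

include hn hR hself hcross hsumw hlamx

lemma sumabs_le_psi (x : EuclideanSpace ℝ (Fin n)) (hx : x ∈ closedBall x0 R) :
    ∃ k : ℕ, k ≤ n+1 ∧ ∑ j, |lam j x| ≤ psiF n k := by
  classical
  set γ : ℝ := (n:ℝ)/((((n:ℝ)+1))*R^2) with hγ
  have hγ0 : 0 ≤ γ := by rw [hγ]; positivity
  have hu : ‖x - x0‖ ≤ R := by rwa [mem_closedBall, dist_eq_norm] at hx
  set A : Finset (Fin (n+1)) := univ.filter (fun j => 0 ≤ lam j x) with hA
  refine ⟨A.card, ?_, ?_⟩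
  · have := Finset.card_le_card (Finset.subset_univ A)
    simpa using this
  set sA : EuclideanSpace ℝ (Fin n) := ∑ j ∈ A, w j with hsA
  have hSA : ∑ j ∈ A, lam j x = (A.card:ℝ)/((n:ℝ)+1) + γ * ⟪x - x0, sA⟫ := by
    rw [Finset.sum_congr rfl (fun j _ => hlamx j x), Finset.sum_add_distrib,
      Finset.sum_const, ← Finset.mul_sum, hsA, ← inner_sum, nsmul_eq_mul]
    ring
  have htot : ∑ j, lam j x = 1 := sum_lam_eq_one hn hR hlamx x hsumw
  have hsplitabs := Finset.sum_filter_add_sum_filter_not univ (fun j => 0 ≤ lam j x)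
    (fun j => |lam j x|)
  have hsplitlam := Finset.sum_filter_add_sum_filter_not univ (fun j => 0 ≤ lam j x)
    (fun j => lam j x)
  have hAabs : ∑ j ∈ A, |lam j x| = ∑ j ∈ A, lam j x := by
    apply Finset.sum_congr rfl
    intro j hj
    exact abs_of_nonneg ((Finset.mem_filter.mp hj).2)
  have hNabs : ∑ j ∈ univ.filter (fun j => ¬ 0 ≤ lam j x), |lam j x|
      = - ∑ j ∈ univ.filter (fun j => ¬ 0 ≤ lam j x), lam j x := by
    rw [← Finset.sum_neg_distrib]
    apply Finset.sum_congr rfl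
    intro j hj
    exact abs_of_neg (lt_of_not_ge (Finset.mem_filter.mp hj).2)
  have hFval : ∑ j, |lam j x| = 2 * ∑ j ∈ A, lam j x - 1 := by
    rw [← hsplitabs, hAabs, hNabs]
    have : ∑ j ∈ univ.filter (fun j => ¬ 0 ≤ lam j x), lam j x
        = 1 - ∑ j ∈ A, lam j x := by
      rw [← htot, ← hsplitlam]; ring
    rw [this]; ring
  have hinner : ⟪x - x0, sA⟫ ≤ R * ‖sA‖ := by
    calc ⟪x - x0, sA⟫ ≤ ‖x - x0‖ * ‖sA‖ := real_inner_le_norm _ _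
    _ ≤ R * ‖sA‖ := mul_le_mul_of_nonneg_right hu (norm_nonneg _)
  have hgn := gamma_norm_eq hn hR hself hcross A
  rw [← hsA, ← hγ] at hgn
  have hstep : ∑ j, |lam j x| ≤ 2*(A.card:ℝ)/((n:ℝ)+1) - 1
      + 2 * (Real.sqrt n/((n:ℝ)+1) * Real.sqrt ((A.card:ℝ) * (((n:ℝ)+1) - (A.card:ℝ)))) := by
    have h1 : γ * ⟪x - x0, sA⟫ ≤ γ * (R * ‖sA‖) := mul_le_mul_of_nonneg_left hinner hγ0
    calc ∑ j, |lam j x| = 2 * ∑ j ∈ A, lam j x - 1 := hFval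
    _ = 2 * ((A.card:ℝ)/((n:ℝ)+1) + γ * ⟪x - x0, sA⟫) - 1 := by rw [hSA]
    _ ≤ 2 * ((A.card:ℝ)/((n:ℝ)+1) + γ * (R * ‖sA‖)) - 1 := by linarith [h1]
    _ = 2*(A.card:ℝ)/((n:ℝ)+1) - 1
      + 2 * (Real.sqrt n/((n:ℝ)+1) * Real.sqrt ((A.card:ℝ) * (((n:ℝ)+1) - (A.card:ℝ)))) := by
        rw [hgn]; ring
  rw [psiF_def]
  have habs : -(1 - 2 * (A.card:ℝ) / ((n : ℝ) + 1)) ≤ |1 - 2 * (A.card:ℝ) / ((n : ℝ) + 1)| :=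
    neg_le_abs _
  calc ∑ j, |lam j x| ≤ _ := hstep
  _ ≤ 2 * Real.sqrt n / ((n : ℝ) + 1) * Real.sqrt ((A.card:ℝ) * ((n : ℝ) + 1 - (A.card:ℝ)))
      + |1 - 2 * (A.card:ℝ) / ((n : ℝ) + 1)| := by
    have e : 2 * (Real.sqrt n/((n:ℝ)+1) * Real.sqrt ((A.card:ℝ) * (((n:ℝ)+1) - (A.card:ℝ))))
        = 2 * Real.sqrt n / ((n : ℝ) + 1) * Real.sqrt ((A.card:ℝ) * ((n : ℝ) + 1 - (A.card:ℝ))) := by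
      ring
    rw [← e]
    linarith

lemma exists_point_ge (k : ℕ) (hk : k ≤ n+1) :
    ∃ x ∈ closedBall x0 R, psiF n (k:ℝ) ≤ ∑ j, |lam j x| := by
  classical
  set γ : ℝ := (n:ℝ)/((((n:ℝ)+1))*R^2) with hγ
  -- reduce to m = max k (n+1-k)
  set m : ℕ := max k (n+1-k) with hm
  have hm1 : n+1 ≤ 2*m := by omega
  have hm2 : m ≤ n+1 := by omega
  have hpsikm : psiF n (k:ℝ) = psiF n (m:ℝ) := by
    rcases max_cases k (n+1-k) with ⟨h1, _⟩ | ⟨h1, _⟩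
    · rw [hm, h1]
    · rw [hm, h1]
      have hcast : ((n+1-k:ℕ):ℝ) = (n:ℝ)+1-(k:ℝ) := by
        rw [Nat.cast_sub hk]; push_cast; ring
      rw [hcast, psiF_symm]
  rw [hpsikm]
  rcases Nat.lt_or_ge m (n+1) with hmlt | hmge
  · -- 1 ≤ m ≤ n : main case
    have hm0 : 1 ≤ m := by omega
    obtain ⟨A, -, hAcard⟩ := Finset.exists_subset_card_eq (s := (univ : Finset (Fin (n+1)))) (n := m)
      (by simpa using hm2)
    set sA : EuclideanSpace ℝ (Fin n) := ∑ j ∈ A, w j with hsA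
    have hns : ‖sA‖^2 = R^2 * ((m:ℝ) * (((n:ℝ)+1) - (m:ℝ)))/(n:ℝ) := by
      rw [hsA, norm_subset_sum_sq hn hR hself hcross A, hAcard]
    have hnpos : (0:ℝ) < (n:ℝ) := by exact_mod_cast hn
    have hm0' : (1:ℝ) ≤ (m:ℝ) := by exact_mod_cast hm0
    have hmlt' : (m:ℝ) ≤ (n:ℝ) := by exact_mod_cast Nat.lt_succ_iff.mp hmlt
    have hsq_pos : 0 < ‖sA‖^2 := by
      rw [hns]
      have : (0:ℝ) < (m:ℝ) * (((n:ℝ)+1) - (m:ℝ)) := by nlinarith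
      positivity
    have hspos : 0 < ‖sA‖ := by
      rcases lt_or_eq_of_le (norm_nonneg sA) with h | h
      · exact h
      · exfalso; rw [← h] at hsq_pos; simp at hsq_pos
    refine ⟨x0 + (R/‖sA‖) • sA, ?_, ?_⟩
    · rw [mem_closedBall, dist_eq_norm, add_sub_cancel_left, norm_smul,
        Real.norm_eq_abs, abs_of_nonneg (by positivity), div_mul_cancel₀ _ (ne_of_gt hspos)]
    · set x : EuclideanSpace ℝ (Fin n) := x0 + (R/‖sA‖) • sA with hx
      have hxs : x - x0 = (R/‖sA‖) • sA := by rw [hx, add_sub_cancel_left]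
      have hinner : ⟪x - x0, sA⟫ = R * ‖sA‖ := by
        rw [hxs, real_inner_smul_left, real_inner_self_eq_norm_sq]
        field_simp
      have hSA : ∑ j ∈ A, lam j x = (m:ℝ)/((n:ℝ)+1) + γ * (R * ‖sA‖) := by
        rw [Finset.sum_congr rfl (fun j _ => hlamx j x), Finset.sum_add_distrib,
          Finset.sum_const, ← Finset.mul_sum, ← inner_sum, ← hsA, hinner, hAcard,
          nsmul_eq_mul]
        ring
      have hgn := gamma_norm_eq hn hR hself hcross A
      rw [← hsA, ← hγ, hAcard] at hgn
      have htot : ∑ j, lam j x = 1 := sum_lam_eq_one hn hR hlamx x hsumw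
      have hsplit := Finset.sum_add_sum_compl A (fun j => |lam j x|)
      have hsplitlam := Finset.sum_add_sum_compl A (fun j => lam j x)
      have h1 : ∑ j ∈ A, lam j x ≤ ∑ j ∈ A, |lam j x| :=
        Finset.sum_le_sum (fun j _ => le_abs_self _)
      have h2 : - ∑ j ∈ Aᶜ, lam j x ≤ ∑ j ∈ Aᶜ, |lam j x| := by
        rw [← Finset.sum_neg_distrib]
        exact Finset.sum_le_sum (fun j _ => neg_le_abs _)
      have hF : 2 * ∑ j ∈ A, lam j x - 1 ≤ ∑ j, |lam j x| := by
        have hc : ∑ j ∈ Aᶜ, lam j x = 1 - ∑ j ∈ A, lam j x := by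
          rw [← htot, ← hsplitlam]; ring
        have := hc ▸ h2
        linarith [h1, this, hsplit.le, hsplit.ge]
      rw [psiF_def]
      have habs : |1 - 2 * (m:ℝ) / ((n : ℝ) + 1)| = 2 * (m:ℝ) / ((n : ℝ) + 1) - 1 := by
        rw [abs_of_nonpos]
        · ring
        · rw [sub_nonpos, le_div_iff₀ (by positivity : (0:ℝ) < (n:ℝ)+1)]
          have : ((n:ℝ))+1 ≤ 2*(m:ℝ) := by exact_mod_cast hm1
          linarith
      rw [habs]
      rw [hSA, hgn] at hF
      have e : 2 * ((m:ℝ)/((n:ℝ)+1) + Real.sqrt n/((n:ℝ)+1) *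
          Real.sqrt ((m:ℝ) * (((n:ℝ)+1) - (m:ℝ)))) - 1
          = 2 * Real.sqrt ↑n / (↑n + 1) * Real.sqrt (↑m * (↑n + 1 - ↑m))
            + (2 * ↑m / (↑n + 1) - 1) := by ring
      rw [e] at hF
      exact hF
  · -- m = n+1 : degenerate case, use the center
    have hmeq : m = n+1 := by omega
    refine ⟨x0, mem_closedBall_self (le_of_lt hR), ?_⟩
    have hlam0 : ∀ j, lam j x0 = 1/((n:ℝ)+1) := by
      intro j
      rw [hlamx j x0, sub_self, inner_zero_left]
      ring
    have hFx0 : ∑ j, |lam j x0| = 1 := by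
      rw [Finset.sum_congr rfl (fun j _ => by rw [hlam0 j, abs_of_nonneg (by positivity)])]
      rw [Finset.sum_const, Finset.card_univ, Fintype.card_fin, nsmul_eq_mul]
      field_simp
      push_cast
      rfl
    rw [hFx0, hmeq]
    have hcast : ((n+1:ℕ):ℝ) = (n:ℝ)+1 := by push_cast; ring
    rw [hcast, psiF_def]
    rw [show ((n:ℝ)+1) * ((n:ℝ) + 1 - ((n:ℝ)+1)) = 0 by ring, Real.sqrt_zero]
    rw [show 1 - 2 * ((n:ℝ)+1) / ((n:ℝ) + 1) = -1 by field_simp <;> norm_num]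
    norm_num

end

end AuxRegSimplexProof

end
/-- Theorem 11.2: For a regular simplex inscribed into a ball
`B = B(x⁰;R)` and the corresponding projector `P*`, with
`ψ(t) = (2√n/(n+1))·√(t(n+1−t)) + |1 − 2t/(n+1)|` and
`a = ⌊(n+1)/2 − √(n+1)/2⌋`:  `‖P*‖_B = max{ψ(a), ψ(a+1)}`,
`√n ≤ ‖P*‖_B ≤ √(n+1)`; `‖P*‖_B = √n` only for `n = 1`, and
`‖P*‖_B = √(n+1)` iff `√(n+1)` is an integer. -/
theorem regular_simplex_proj_norm (n : ℕ) (hn : 0 < n)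
    (x0 : EuclideanSpace ℝ (Fin n)) (R : ℝ) (hR : 0 < R)
    (v : Fin (n + 1) → EuclideanSpace ℝ (Fin n)) (hv : AffineIndependent ℝ v)
    (e : ℝ) (hreg : ∀ j k, j ≠ k → dist (v j) (v k) = e)
    (hins : ∀ j, dist (v j) x0 = R)
    (lam : Fin (n + 1) → (EuclideanSpace ℝ (Fin n) →ᵃ[ℝ] ℝ))
    (hlam : IsLagrangeBasis v lam)
    (ψ : ℝ → ℝ)
    (hψ : ∀ t : ℝ, ψ t = (2 * Real.sqrt n / ((n : ℝ) + 1)) *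
      Real.sqrt (t * ((n : ℝ) + 1 - t)) + |1 - 2 * t / ((n : ℝ) + 1)|)
    (a : ℤ) (ha : a = ⌊((n : ℝ) + 1) / 2 - Real.sqrt ((n : ℝ) + 1) / 2⌋) :
    projNorm (Metric.closedBall x0 R) lam = max (ψ (a : ℝ)) (ψ ((a : ℝ) + 1)) ∧
    Real.sqrt n ≤ projNorm (Metric.closedBall x0 R) lam ∧
    projNorm (Metric.closedBall x0 R) lam ≤ Real.sqrt ((n : ℝ) + 1) ∧
    (projNorm (Metric.closedBall x0 R) lam = Real.sqrt n → n = 1) ∧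
    (projNorm (Metric.closedBall x0 R) lam = Real.sqrt ((n : ℝ) + 1) ↔
      ∃ m : ℕ, (m : ℝ) = Real.sqrt ((n : ℝ) + 1)) := by
  have hψF : ∀ t : ℝ, ψ t = psiF n t := fun t => by rw [hψ, psiF_def]
  have ha' : a = ⌊tstarF n⌋ := by
    rw [ha]; congr 1; unfold tstarF; ring
  obtain ⟨hlamx, hself, hcross, hsumw⟩ :=
    lagrange_formula hn x0 R hR v hv e hreg hins lam hlam
  have h0a := a_nonneg hn ha'
  have h2a := two_a_le hn ha'
  have h0a' : (0:ℝ) ≤ (a:ℝ) := by exact_mod_cast h0a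
  -- the candidate value
  set M : ℝ := max (psiF n (a:ℝ)) (psiF n ((a:ℝ)+1)) with hM
  have hub : ∀ y ∈ (fun x => ∑ j, |lam j x|) '' (Metric.closedBall x0 R), y ≤ M := by
    rintro y ⟨x, hx, rfl⟩
    obtain ⟨k, hk, hle⟩ := sumabs_le_psi hn hR hself hcross hsumw hlamx x hx
    exact le_trans hle (psiF_nat_le_max hn ha' k hk)
  have hbdd : BddAbove ((fun x => ∑ j, |lam j x|) '' (Metric.closedBall x0 R)) :=
    ⟨M, fun y hy => hub y hy⟩
  have hsqM : Real.sqrt n ≤ M := sqrtn_le_max hn ha'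
  have hM0 : 0 ≤ M := le_trans (Real.sqrt_nonneg _) hsqM
  -- the cast bookkeeping for a.toNat
  have hcast : ((a.toNat : ℕ) : ℝ) = (a:ℝ) := by
    have := Int.toNat_of_nonneg h0a
    exact_mod_cast this
  have hkle : a.toNat ≤ n + 1 ∧ a.toNat + 1 ≤ n + 1 := by
    have h1 : 2*((a.toNat:ℕ):ℝ) + 2 ≤ (n:ℝ) + 1 := by rw [hcast]; exact h2a
    have h2 : 2*(a.toNat:ℕ) + 2 ≤ n + 1 := by exact_mod_cast h1
    omega
  have hge1 : psiF n (a:ℝ) ≤ sSup ((fun x => ∑ j, |lam j x|) '' (Metric.closedBall x0 R)) := by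
    obtain ⟨x, hx, hle⟩ := exists_point_ge hn hR hself hcross hsumw hlamx a.toNat hkle.1
    rw [hcast] at hle
    exact le_trans hle (le_csSup hbdd ⟨x, hx, rfl⟩)
  have hge2 : psiF n ((a:ℝ)+1) ≤
      sSup ((fun x => ∑ j, |lam j x|) '' (Metric.closedBall x0 R)) := by
    obtain ⟨x, hx, hle⟩ := exists_point_ge hn hR hself hcross hsumw hlamx (a.toNat+1) hkle.2
    have hcast2 : ((a.toNat + 1 : ℕ) : ℝ) = (a:ℝ) + 1 := by push_cast; rw [hcast]
    rw [hcast2] at hle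
    exact le_trans hle (le_csSup hbdd ⟨x, hx, rfl⟩)
  have heq : projNorm (Metric.closedBall x0 R) lam = M := by
    unfold projNorm
    exact le_antisymm (Real.sSup_le hub hM0) (max_le hge1 hge2)
  refine ⟨?_, ?_, ?_, ?_, ?_⟩
  · rw [heq, hψF, hψF]
  · rw [heq]; exact hsqM
  · rw [heq]; exact max_le_q hn ha'
  · intro h
    have h2 : M = Real.sqrt n := by rw [← heq]; exact h
    exact max_eq_sqrtn_imp hn ha' h2
  · rw [heq]; exact max_eq_q_iff hn ha'
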